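/- Let G be a group with torsion subgroup T such that G/T is divisible and each p-torsion subgroup T_p is bounded. If γ is an endomorphism of G and G' = γ(G) with T' = γ(T), then G'/T' is torsion-free divisible and T' = G' ∩ T; in particular T' is the torsion subgroup of G'. -/

import Mathlib

private lemma stmt13_key {G : Type*} [AddCommGroup G]
    (hdiv : ∀ n : ℕ, 0 < n → ∀ q : G ⧸ AddCommGroup.torsion G, ∃ r, n • r = q)
    (hbdd : ∀ p : ℕ, p.Prime →
      ∃ k : ℕ, ∀ x : G, (∃ j : ℕ, p ^ j • x = 0) → p ^ k • x = 0)
    (γ : AddMonoid.End G) (g : G) (hx : IsOfFinAddOrder (γ g)) :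
    γ g ∈ (AddCommGroup.torsion G).map (γ : G →+ G) := by
  classical
  set T := AddCommGroup.torsion G with hTdef
  obtain ⟨m, hm, hmx⟩ := hx.exists_nsmul_eq_zero
  -- the bounds
  have hk : ∀ p : ℕ, ∃ k : ℕ, p.Prime → ∀ x : G, (∃ j : ℕ, p ^ j • x = 0) → p ^ k • x = 0 := by
    intro p
    by_cases hp : p.Prime
    · obtain ⟨k, hkk⟩ := hbdd p hp
      exact ⟨k, fun _ => hkk⟩
    · exact ⟨0, fun h => absurd h hp⟩
  choose k hkspec using hk
  set K : ℕ := ∏ p ∈ m.primeFactors, p ^ k p with hKdef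
  have hKpos : 0 < K := by
    refine Finset.prod_pos fun p hp => ?_
    exact pow_pos (Nat.Prime.pos (Nat.prime_of_mem_primeFactors hp)) _
  set n : ℕ := m * K with hndef
  have hnpos : 0 < n := Nat.mul_pos hm hKpos
  have hmn : m ∣ n := ⟨K, rfl⟩
  -- divisibility: find h with n • h - g ∈ T
  obtain ⟨r, hr⟩ := hdiv n hnpos (QuotientAddGroup.mk g)
  obtain ⟨h, rfl⟩ := QuotientAddGroup.mk_surjective r
  have ht : n • h - g ∈ T := by
    rw [← QuotientAddGroup.eq_iff_sub_mem]
    rw [← hr]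
    rfl
  set t : G := n • h - g with htdef
  set w : G := γ h with hwdef
  have hnw : n • w = γ g + γ t := by
    have : γ t = n • γ h - γ g := by
      rw [htdef, map_sub, map_nsmul]
    rw [this, hwdef]; abel
  -- w has finite order
  have hγt : IsOfFinAddOrder (γ t) := (γ : G →+ G).isOfFinAddOrder ht
  have hnwT : IsOfFinAddOrder (n • w) := by
    rw [hnw]
    exact (AddCommGroup.torsion G).add_mem ((isOfFinAddOrder_iff_nsmul_eq_zero).2 ⟨m, hm, hmx⟩) hγt
  have hw : IsOfFinAddOrder w := by
    obtain ⟨s, hs, hsw⟩ := hnwT.exists_nsmul_eq_zero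
    exact (isOfFinAddOrder_iff_nsmul_eq_zero).2 ⟨s * n, Nat.mul_pos hs hnpos,
      by rw [mul_comm, mul_nsmul]; exact hsw⟩
  set N : ℕ := addOrderOf w with hNdef
  have hNpos : 0 < N := hw.addOrderOf_pos
  set d : ℕ := Nat.gcd N (n ^ N) with hddef
  have hdN : d ∣ N := Nat.gcd_dvd_left _ _
  have hdpos : 0 < d := Nat.gcd_pos_of_pos_left _ hNpos
  set c : ℕ := N / d with hcdef
  have hcd : c * d = N := Nat.div_mul_cancel hdN
  have hcpos : 0 < c := Nat.div_pos (Nat.le_of_dvd hNpos hdN) hdpos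
  -- key bound: for any prime p dividing n, N.factorization p ≤ n.factorization p
  have hbound : ∀ p : ℕ, p.Prime → p ∣ n → N.factorization p ≤ n.factorization p := by
    intro p hp hpn
    have hpm : p ∣ m := by
      rcases (Nat.Prime.dvd_mul hp).1 hpn with h1 | h1
      · exact h1
      · obtain ⟨q, hq, hq2⟩ := hp.prime.exists_mem_finset_dvd h1
        have : p = q := (Nat.prime_dvd_prime_iff_eq hp
          (Nat.prime_of_mem_primeFactors hq)).1 (hp.dvd_of_dvd_pow hq2)
        exact this ▸ Nat.dvd_of_mem_primeFactors hq
    set b : ℕ := N.factorization p with hbdef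
    -- the p-component of w
    set wp : G := (N / p ^ b) • w with hwpdef
    have hwp0 : p ^ b • wp = 0 := by
      rw [hwpdef, ← mul_nsmul]
      have : N / p ^ b * p ^ b = N := Nat.div_mul_cancel (Nat.ordProj_dvd N p)
      rw [this, hNdef, addOrderOf_nsmul_eq_zero]
    have hwpk : p ^ k p • wp = 0 := hkspec p hp wp ⟨b, hwp0⟩
    have hb_le : b ≤ k p := by
      have hord : addOrderOf wp = p ^ b := by
        rw [hwpdef, addOrderOf_nsmul_of_dvd (Nat.ordCompl_pos p hNpos.ne').ne'
          (Nat.ordCompl_dvd N p)]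
        exact Nat.div_div_self (Nat.ordProj_dvd N p) hNpos.ne'
      have : p ^ b ∣ p ^ k p := by
        rw [← hord]
        exact addOrderOf_dvd_of_nsmul_eq_zero hwpk
      exact (Nat.pow_dvd_pow_iff_le_right hp.one_lt).1 this
    -- p ^ b ∣ n since p * p ^ (k p) ∣ m * K
    have hpK : p ^ k p ∣ K := by
      have hpmem : p ∈ m.primeFactors := Nat.mem_primeFactors.2 ⟨hp, hpm, hm.ne'⟩
      exact Finset.dvd_prod_of_mem (fun q => q ^ k q) hpmem
    have hpbn : p ^ b ∣ n := by
      calc p ^ b ∣ p ^ k p := pow_dvd_pow p hb_le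
        _ ∣ p * p ^ k p := dvd_mul_left _ _
        _ ∣ m * K := mul_dvd_mul hpm hpK
        _ = n := rfl
    exact (Nat.Prime.pow_dvd_iff_le_factorization hp hnpos.ne').1 hpbn
  have hdn : d ∣ n := by
    rw [← Nat.factorization_le_iff_dvd hdpos.ne' hnpos.ne', Finsupp.le_def]
    intro p
    have h1 : d.factorization p ≤ (n ^ N).factorization p := by
      rw [hddef, Nat.factorization_gcd hNpos.ne' (pow_pos hnpos N).ne']
      rw [Finsupp.inf_apply]
      exact inf_le_right
    by_cases hp : 0 < n.factorization p
    · have hpp : p.Prime := Nat.prime_of_mem_primeFactors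
        (by rw [← Nat.support_factorization n]; exact Finsupp.mem_support_iff.2 hp.ne')
      have hpn : p ∣ n := Nat.dvd_of_factorization_pos hp.ne'
      have h2 : d.factorization p ≤ N.factorization p := by
        rw [hddef, Nat.factorization_gcd hNpos.ne' (pow_pos hnpos N).ne']
        rw [Finsupp.inf_apply]
        exact inf_le_left
      exact h2.trans (hbound p hpp hpn)
    · rw [Nat.factorization_pow] at h1
      simpa [Nat.le_zero.1 (Nat.not_lt.1 hp)] using h1
  have hcn : Nat.Coprime c n := by
    rw [Nat.coprime_iff_gcd_eq_one]
    by_contra hne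
    set p : ℕ := (Nat.gcd c n).minFac with hpdef
    have hp : p.Prime := Nat.minFac_prime hne
    have hpc : p ∣ c := (Nat.minFac_dvd _).trans (Nat.gcd_dvd_left _ _)
    have hpn : p ∣ n := (Nat.minFac_dvd _).trans (Nat.gcd_dvd_right _ _)
    have hfc : c.factorization p = 0 := by
      rw [hcdef, Nat.factorization_div hdN, Finsupp.tsub_apply, hddef,
        Nat.factorization_gcd hNpos.ne' (pow_pos hnpos N).ne', Finsupp.inf_apply,
        Nat.factorization_pow, Finsupp.smul_apply]
      have h1 : N.factorization p < N * n.factorization p := by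
        have hn1 : 1 ≤ n.factorization p :=
          (Nat.Prime.factorization_pos_of_dvd hp hnpos.ne' hpn)
        calc N.factorization p < N := Nat.factorization_lt p hNpos.ne'
          _ = N * 1 := (mul_one N).symm
          _ ≤ N * n.factorization p := Nat.mul_le_mul_left N hn1
      rw [smul_eq_mul, min_eq_left h1.le]
      omega
    have : 0 < c.factorization p := Nat.Prime.factorization_pos_of_dvd hp hcpos.ne' hpc
    omega
  -- c • (n • w) = 0
  have hcnw : c • (n • w) = 0 := by
    rw [← mul_nsmul]
    have hNdvd : N ∣ n * c := by
      rw [mul_comm n c, ← hcd]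
      exact mul_dvd_mul_left c hdn
    exact addOrderOf_dvd_iff_nsmul_eq_zero.1 (hNdef ▸ hNdvd)
  -- c • γ g = - γ (c • t)
  have hcg : c • γ g = - γ (c • t) := by
    have h0 : c • (γ g + γ t) = 0 := by rw [← hnw]; exact hcnw
    rw [smul_add] at h0
    rw [map_nsmul]
    exact eq_neg_of_add_eq_zero_left h0
  -- Bezout: m and c are coprime
  have hcm : Nat.Coprime c m := Nat.Coprime.coprime_dvd_right hmn hcn
  set a : ℤ := Int.gcdA m c with hadef
  set b : ℤ := Int.gcdB m c with hbdef'
  have hbez : (1 : ℤ) = m * a + c * b := by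
    have := Int.gcd_eq_gcd_ab (m : ℤ) (c : ℤ)
    rwa [Int.gcd_natCast_natCast, Nat.coprime_comm.1 hcm, Nat.cast_one] at this
  refine ⟨(-b) • (c • t), ?_, ?_⟩
  · exact T.zsmul_mem (T.nsmul_mem ht c) (-b)
  · have hmz : (m : ℤ) • γ g = 0 := by simp only [natCast_zsmul]; exact hmx
    have hcz : (c : ℤ) • γ g = - γ (c • t) := by simp only [natCast_zsmul]; exact hcg
    calc γ ((-b) • (c • t)) = (-b) • γ (c • t) := map_zsmul γ _ _
      _ = b • (- γ (c • t)) := by rw [neg_smul, smul_neg]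
      _ = b • ((c : ℤ) • γ g) := by rw [hcz]
      _ = ((c : ℤ) * b) • γ g := by rw [mul_comm, mul_smul]
      _ = ((m : ℤ) * a) • γ g + ((c : ℤ) * b) • γ g := by
          have hz : ((m : ℤ) * a) • γ g = 0 := by rw [mul_comm, mul_smul, hmz, smul_zero]
          rw [hz, zero_add]
      _ = ((m : ℤ) * a + (c : ℤ) * b) • γ g := (add_smul _ _ _).symm
      _ = γ g := by rw [← hbez, one_smul]

theorem stmt13 {G : Type*} [AddCommGroup G]
    (hdiv : ∀ n : ℕ, 0 < n → ∀ q : G ⧸ AddCommGroup.torsion G, ∃ r, n • r = q)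
    (hbdd : ∀ p : ℕ, p.Prime →
      ∃ k : ℕ, ∀ x : G, (∃ j : ℕ, p ^ j • x = 0) → p ^ k • x = 0)
    (γ : AddMonoid.End G)
    (G' T' : AddSubgroup G)
    (hG' : G' = AddMonoidHom.range (γ : G →+ G))
    (hT' : T' = (AddCommGroup.torsion G).map (γ : G →+ G)) :
    -- G'/T' is divisible:
    (∀ x ∈ G', ∀ n : ℕ, 0 < n → ∃ y ∈ G', n • y - x ∈ T') ∧
    -- G'/T' is torsion-free:
    (∀ x ∈ G', ∀ n : ℕ, 0 < n → n • x ∈ T' → x ∈ T') ∧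
    -- T' = G' ∩ T, so T' is the torsion subgroup of G':
    T' = G' ⊓ AddCommGroup.torsion G := by
  have h3 : T' = G' ⊓ AddCommGroup.torsion G := by
    apply le_antisymm
    · intro x hx
      rw [hT'] at hx
      obtain ⟨s, hs, rfl⟩ := hx
      refine ⟨?_, ?_⟩
      · rw [hG']; exact ⟨s, rfl⟩
      · exact (γ : G →+ G).isOfFinAddOrder hs
    · rintro x ⟨hxG, hxT⟩
      rw [hG'] at hxG
      obtain ⟨g, rfl⟩ := hxG
      rw [hT']
      exact stmt13_key hdiv hbdd γ g hxT
  refine ⟨?_, ?_, h3⟩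
  · intro x hx n hn
    rw [hG'] at hx
    obtain ⟨g, rfl⟩ := hx
    obtain ⟨r, hr⟩ := hdiv n hn (QuotientAddGroup.mk g)
    obtain ⟨h, rfl⟩ := QuotientAddGroup.mk_surjective r
    have ht : n • h - g ∈ AddCommGroup.torsion G := by
      rw [← QuotientAddGroup.eq_iff_sub_mem, ← hr]
      rfl
    refine ⟨γ h, ?_, ?_⟩
    · rw [hG']; exact ⟨h, rfl⟩
    · rw [hT']
      exact ⟨n • h - g, ht, by
        show (γ : G →+ G) (n • h - g) = n • (γ : G →+ G) h - (γ : G →+ G) g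
        rw [map_sub, map_nsmul]⟩
  · intro x hx n hn hnx
    rw [h3] at hnx ⊢
    refine ⟨hx, ?_⟩
    obtain ⟨s, hs, hsx⟩ := (hnx.2 : IsOfFinAddOrder (n • x)).exists_nsmul_eq_zero
    exact (isOfFinAddOrder_iff_nsmul_eq_zero).2 ⟨s * n, Nat.mul_pos hs hn,
      by rw [mul_comm, mul_nsmul]; exact hsx⟩
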